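/- For single forking (m = 1) of K tasks with shifted exponential service (shift c, rate μ), batches (n_0, N - n_0) at times (0, t_1) with t_1 > 0, let α = cμN, x = n_0/N, u = t_1/c. The mean makespan satisfies E[S]/c = 1 + (1/α) ∑_{k=1}^{K} (1/k) ( 1 + ((1-x)/x)(1 - e^{-αxu})^k ). -/

import Mathlib

open MeasureTheory Set Filter

private lemma geom_aux (q : ℝ) (K : ℕ) :
    ∑ k ∈ Finset.range K, (1 - q) ^ k * q = 1 - (1 - q) ^ K := by
  induction K with
  | zero => simp
  | succ n ih => rw [Finset.sum_range_succ, ih, pow_succ]; ring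

private lemma hasDerivAt_aux (β γ : ℝ) (hβ : β ≠ 0) (k : ℕ) (s : ℝ) :
    HasDerivAt (fun s => (1 - Real.exp (-(β * s) + γ)) ^ (k + 1) / ((k + 1) * β))
      ((1 - Real.exp (-(β * s) + γ)) ^ k * Real.exp (-(β * s) + γ)) s := by
  have h1 : HasDerivAt (fun s : ℝ => -(β * s) + γ) (-β) s := by
    simpa using (((hasDerivAt_id s).const_mul β).neg.add_const γ)
  have h3 : HasDerivAt (fun s => 1 - Real.exp (-(β * s) + γ))
      (-(Real.exp (-(β * s) + γ) * (-β))) s := h1.exp.const_sub 1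
  have h4 := (h3.fun_pow (k + 1)).div_const ((k + 1) * β)
  have hk : ((k : ℝ) + 1) ≠ 0 := by positivity
  refine h4.congr_deriv ?_
  simp only [Nat.add_sub_cancel, Nat.cast_add, Nat.cast_one]
  field_simp

private lemma hasDerivAt_sum_aux (β γ : ℝ) (hβ : β ≠ 0) (K : ℕ) (s : ℝ) :
    HasDerivAt
      (fun s => ∑ k ∈ Finset.range K,
        (1 - Real.exp (-(β * s) + γ)) ^ (k + 1) / ((k + 1) * β))
      (1 - (1 - Real.exp (-(β * s) + γ)) ^ K) s := by
  have := HasDerivAt.fun_sum (fun k (_ : k ∈ Finset.range K) => hasDerivAt_aux β γ hβ k s)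
  simpa [geom_aux] using this

set_option maxHeartbeats 1000000 in
/-- Single forking of `K` tasks with shifted exponential service (shift `c`, rate `μ`):
batches `(n₀, N - n₀)` at times `(0, t₁)`, `t₁ > 0`. With `α = cμN`, `x = n₀/N`, `u = t₁/c`,
the mean makespan satisfies
`E S / c = 1 + (1/α) ∑_{k=1}^K (1/k) (1 + ((1-x)/x)(1 - e^{-αxu})^k)`. -/
theorem mean_makespan_single_fork (K N n0 : ℕ) (hK : 1 ≤ K) (hn0 : 1 ≤ n0) (hn0N : n0 ≤ N)
    (c μ t1 α x u : ℝ) (hc : 0 < c) (hμ : 0 < μ) (ht1 : 0 < t1)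
    (hα : α = c * μ * N) (hx : x = (n0 : ℝ) / N) (hu : u = t1 / c) :
    (∫ s in Set.Ioi (0 : ℝ),
        (1 - (1 - (if s < c then 1
          else if s < t1 + c then Real.exp (-(μ * (n0 : ℝ) * (s - c)))
          else Real.exp (-(μ * (N : ℝ) * (s - t1 - c)) - μ * (n0 : ℝ) * t1))) ^ K)) / c
      = 1 + (1 / α) * ∑ k ∈ Finset.Icc 1 K, (1 / (k : ℝ)) *
          (1 + ((1 - x) / x) * (1 - Real.exp (-(α * x * u))) ^ k) := by
  have hK0 : K ≠ 0 := by omega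
  have hn0R : (0 : ℝ) < n0 := by exact_mod_cast hn0
  have hNR : (0 : ℝ) < N := by
    have : (1 : ℕ) ≤ N := le_trans hn0 hn0N
    exact_mod_cast this
  have hcT : c < t1 + c := by linarith
  have hT0 : (0 : ℝ) < t1 + c := by linarith
  set a : ℝ := Real.exp (-(μ * n0 * t1)) with ha
  have ha0 : 0 < a := Real.exp_pos _
  have ha1 : a < 1 := by
    rw [ha, Real.exp_lt_one_iff]
    nlinarith [mul_pos (mul_pos hμ hn0R) ht1]
  set g : ℝ → ℝ := fun s => if s < c then 1
      else if s < t1 + c then Real.exp (-(μ * (n0 : ℝ) * (s - c)))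
      else Real.exp (-(μ * (N : ℝ) * (s - t1 - c)) - μ * (n0 : ℝ) * t1) with hgdef
  set f : ℝ → ℝ := fun s => 1 - (1 - g s) ^ K with hfdef
  -- bounds on g
  have hg01 : ∀ s, 0 ≤ g s ∧ g s ≤ 1 := by
    intro s
    rw [hgdef]
    by_cases h1 : s < c
    · simp [h1]
    · by_cases h2 : s < t1 + c
      · simp only [h1, h2, if_false, if_true]
        refine ⟨(Real.exp_pos _).le, ?_⟩
        rw [Real.exp_le_one_iff]
        push_neg at h1
        have := mul_nonneg (mul_nonneg hμ.le hn0R.le) (sub_nonneg.2 h1)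
        linarith
      · simp only [h1, h2, if_false]
        refine ⟨(Real.exp_pos _).le, ?_⟩
        rw [Real.exp_le_one_iff]
        push_neg at h1 h2
        have h3 : (0:ℝ) ≤ μ * N * (s - t1 - c) :=
          mul_nonneg (mul_nonneg hμ.le hNR.le) (by linarith)
        have h4 : (0:ℝ) ≤ μ * n0 * t1 :=
          mul_nonneg (mul_nonneg hμ.le hn0R.le) ht1.le
        linarith
  have hf01 : ∀ s, 0 ≤ f s ∧ f s ≤ 1 := by
    intro s
    obtain ⟨h0, h1⟩ := hg01 s
    constructor
    · simp only [hfdef, sub_nonneg]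
      exact pow_le_one₀ (by linarith) (by linarith)
    · simp only [hfdef]
      have : 0 ≤ (1 - g s) ^ K := pow_nonneg (by linarith) K
      linarith
  -- measurability and integrability on finite sets
  have hgm : Measurable g := by
    apply Measurable.ite (measurableSet_Iio (a := c)) measurable_const
    apply Measurable.ite (measurableSet_Iio (a := t1 + c))
    · exact (Real.continuous_exp.comp (by continuity)).measurable
    · exact (Real.continuous_exp.comp (by continuity)).measurable
  have hfm : Measurable f := ((measurable_const.sub hgm).pow_const K).const_sub 1
  have hint : ∀ s : Set ℝ, volume s ≠ ⊤ → IntegrableOn f s := by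
    intro s hs
    refine Measure.integrableOn_of_bounded (M := 1) hs hfm.aestronglyMeasurable
      (ae_of_all _ fun y => ?_)
    rw [Real.norm_eq_abs, abs_of_nonneg (hf01 y).1]
    exact (hf01 y).2
  -- region 3 data
  have hβ3 : (μ * N : ℝ) ≠ 0 := by positivity
  set γ3 : ℝ := μ * N * (t1 + c) - μ * n0 * t1 with hγ3
  set f3 : ℝ → ℝ := fun s => 1 - (1 - Real.exp (-(μ * N * s) + γ3)) ^ K with hf3def
  set F3 : ℝ → ℝ := fun s => ∑ k ∈ Finset.range K,
      (1 - Real.exp (-(μ * N * s) + γ3)) ^ (k + 1) / ((k + 1) * (μ * N)) with hF3def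
  have eq3on : EqOn f f3 (Set.Ioi (t1 + c)) := by
    intro s hs
    have hs' : t1 + c < s := hs
    have h1 : ¬ s < c := by push_neg; linarith
    have h2 : ¬ s < t1 + c := by push_neg; linarith
    have harg : -(μ * (N : ℝ) * (s - t1 - c)) - μ * (n0 : ℝ) * t1 = -(μ * N * s) + γ3 := by
      rw [hγ3]; ring
    simp only [hfdef, hgdef, hf3def, h1, h2, if_false, harg]
  have hderiv3 : ∀ s ∈ Set.Ici (t1 + c), HasDerivAt F3 (f3 s) s := fun s _ =>
    hasDerivAt_sum_aux (μ * N) γ3 hβ3 K s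
  have h3nonneg : ∀ s ∈ Set.Ioi (t1 + c), 0 ≤ f3 s := by
    intro s hs
    have hs' : t1 + c < s := hs
    have hle : -(μ * N * s) + γ3 ≤ 0 := by
      rw [hγ3]
      nlinarith [mul_pos hμ hNR, mul_pos (mul_pos hμ hn0R) ht1]
    have he1 : Real.exp (-(μ * N * s) + γ3) ≤ 1 := Real.exp_le_one_iff.2 hle
    have he0 : 0 < Real.exp (-(μ * N * s) + γ3) := Real.exp_pos _
    simp only [hf3def, sub_nonneg]
    exact pow_le_one₀ (by linarith) (by linarith)
  have hlim3 : Tendsto F3 atTop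
      (nhds (∑ k ∈ Finset.range K, 1 / ((k + 1) * (μ * N)))) := by
    rw [hF3def]
    apply tendsto_finset_sum
    intro k _
    have h1 : Tendsto (fun s : ℝ => -(μ * N * s) + γ3) atTop atBot := by
      apply tendsto_atBot_add_const_right
      exact tendsto_neg_atTop_atBot.comp (tendsto_id.const_mul_atTop (by positivity))
    have hexp : Tendsto (fun s : ℝ => Real.exp (-(μ * N * s) + γ3)) atTop (nhds 0) :=
      Real.tendsto_exp_atBot.comp h1
    have := (((tendsto_const_nhds (x := (1:ℝ))).sub hexp).pow (k + 1)).div_const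
      ((k + 1) * (μ * N))
    simpa only [sub_zero, one_pow] using this
  have hi3 : IntegrableOn f (Set.Ioi (t1 + c)) := by
    refine (integrableOn_Ioi_deriv_of_nonneg' hderiv3 h3nonneg hlim3).congr_fun ?_
      measurableSet_Ioi
    exact fun s hs => (eq3on hs).symm
  have hargT : -(μ * N * (t1 + c)) + γ3 = -(μ * n0 * t1) := by rw [hγ3]; ring
  have I3 : ∫ s in Set.Ioi (t1 + c), f s
      = (∑ k ∈ Finset.range K, 1 / ((k + 1) * (μ * N)))
        - ∑ k ∈ Finset.range K, (1 - a) ^ (k + 1) / ((k + 1) * (μ * N)) := by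
    rw [setIntegral_congr_fun measurableSet_Ioi eq3on]
    rw [integral_Ioi_of_hasDerivAt_of_nonneg' hderiv3 h3nonneg hlim3]
    congr 1
    rw [hF3def]
    simp only [hargT, ha]
  -- region 1
  have I1 : ∫ s in Set.Ioc (0 : ℝ) c, f s = c := by
    rw [integral_Ioc_eq_integral_Ioo,
      setIntegral_congr_fun (g := fun _ => (1 : ℝ)) measurableSet_Ioo
        (fun s hs => by simp [hfdef, hgdef, hs.2, zero_pow hK0])]
    simp [Real.volume_Ioo, ENNReal.toReal_ofReal hc.le, hc.le]
  -- region 2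
  have hβ2 : (μ * (n0 : ℝ)) ≠ 0 := by positivity
  set γ2 : ℝ := μ * n0 * c with hγ2
  set f2 : ℝ → ℝ := fun s => 1 - (1 - Real.exp (-(μ * n0 * s) + γ2)) ^ K with hf2def
  have eq2on : EqOn f f2 (Set.Ioo c (t1 + c)) := by
    intro s hs
    have h1 : ¬ s < c := by push_neg; exact hs.1.le
    have harg : -(μ * (n0 : ℝ) * (s - c)) = -(μ * n0 * s) + γ2 := by rw [hγ2]; ring
    simp only [hfdef, hgdef, hf2def, h1, hs.2, if_false, if_true, harg]
  have hf2cont : Continuous f2 := by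
    rw [hf2def]
    have hcexp : Continuous fun s : ℝ => Real.exp (-(μ * (n0 : ℝ) * s) + γ2) :=
      Real.continuous_exp.comp (((continuous_const.mul continuous_id).neg).add continuous_const)
    exact continuous_const.sub ((continuous_const.sub hcexp).pow K)
  have I2 : ∫ s in Set.Ioc c (t1 + c), f s
      = ∑ k ∈ Finset.range K, (1 - a) ^ (k + 1) / ((k + 1) * (μ * n0)) := by
    rw [integral_Ioc_eq_integral_Ioo, setIntegral_congr_fun measurableSet_Ioo eq2on,
      ← integral_Ioc_eq_integral_Ioo, ← intervalIntegral.integral_of_le hcT.le]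
    rw [intervalIntegral.integral_eq_sub_of_hasDerivAt
      (f := fun s => ∑ k ∈ Finset.range K,
        (1 - Real.exp (-(μ * n0 * s) + γ2)) ^ (k + 1) / ((k + 1) * (μ * n0)))
      (fun s _ => hasDerivAt_sum_aux (μ * n0) γ2 hβ2 K s)
      (hf2cont.intervalIntegrable c (t1 + c))]
    have hargc : -(μ * (n0 : ℝ) * c) + γ2 = 0 := by rw [hγ2]; ring
    have hargT2 : -(μ * (n0 : ℝ) * (t1 + c)) + γ2 = -(μ * n0 * t1) := by rw [hγ2]; ring
    simp [hargc, hargT2, ha, zero_pow, Nat.succ_ne_zero]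
  -- splitting
  have hkey : ∫ s in Set.Ioi (0 : ℝ), f s
      = c + ((∑ k ∈ Finset.range K, (1 - a) ^ (k + 1) / ((k + 1) * (μ * n0)))
        + ((∑ k ∈ Finset.range K, 1 / ((k + 1) * (μ * N)))
          - ∑ k ∈ Finset.range K, (1 - a) ^ (k + 1) / ((k + 1) * (μ * N)))) := by
    rw [← Set.Ioc_union_Ioi_eq_Ioi hT0.le,
      setIntegral_union (Set.Ioc_disjoint_Ioi le_rfl) measurableSet_Ioi
        (hint _ measure_Ioc_lt_top.ne) hi3,
      ← Set.Ioc_union_Ioc_eq_Ioc hc.le hcT.le,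
      setIntegral_union (Set.Ioc_disjoint_Ioc_of_le le_rfl) measurableSet_Ioc
        (hint _ measure_Ioc_lt_top.ne) (hint _ measure_Ioc_lt_top.ne),
      I1, I2, I3]
    ring
  rw [hkey]
  -- right-hand side
  have haxu : α * x * u = μ * n0 * t1 := by
    rw [hα, hx, hu]
    field_simp
  rw [haxu, ← ha]
  rw [← Finset.Ico_add_one_right_eq_Icc, Finset.sum_Ico_eq_sum_range]
  simp only [Nat.add_sub_cancel]
  rw [add_div, div_self hc.ne', ← Finset.sum_sub_distrib, ← Finset.sum_add_distrib,
    Finset.sum_div, Finset.mul_sum]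
  congr 1
  apply Finset.sum_congr rfl
  intro k _
  have hk1 : ((k : ℝ) + 1) ≠ 0 := by positivity
  have hk1' : ((1 + k : ℕ) : ℝ) = (k : ℝ) + 1 := by push_cast; ring
  rw [hα, hx, hk1']
  have h1k : (1 - a) ^ (1 + k) = (1 - a) ^ (k + 1) := by rw [add_comm]
  rw [h1k]
  field_simp
  ring
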